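/- Let S ⊂ ℝ^d be a nonempty compact convex set with diameter D, let f : ℝ^d → ℝ have L-Lipschitz gradient on S with G := sup_{x∈S} ‖∇f(x)‖ < ∞, let C ≥ max{L D², G D}, and suppose g_δ(x^k) satisfies |⟨∇f(x^k) − g_δ(x^k), s − x^k⟩| ≤ δ ‖∇f(x^k)‖ for all s ∈ S. Set s^k ∈ argmin_{s ∈ S} ⟨g_δ(x^k), s − x^k⟩, G̃(x^k) = ⟨g_δ(x^k), x^k − s^k⟩, ᾱ_k = max{G̃(x^k) − δ‖∇f(x^k)‖, 0}/C, and x^{k+1} = x^k + ᾱ_k (s^k − x^k). Then f(x^{k+1}) ≤ f(x^k) − (max{G̃(x^k) − δ‖∇f(x^k)‖, 0})² / (2C). -/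

import Mathlib

open RealInnerProductSpace

theorem descent_lemma_aux {d : ℕ} {S : Set (EuclideanSpace ℝ (Fin d))}
    (hSconv : Convex ℝ S)
    {f : EuclideanSpace ℝ (Fin d) → ℝ} {L : ℝ}
    (hdiff : ∀ x ∈ S, DifferentiableAt ℝ f x)
    (hLip : ∀ x ∈ S, ∀ y ∈ S, ‖gradient f x - gradient f y‖ ≤ L * ‖x - y‖)
    {x y : EuclideanSpace ℝ (Fin d)} (hx : x ∈ S) (hy : y ∈ S) :
    f y ≤ f x + ⟪gradient f x, y - x⟫ + L / 2 * ‖y - x‖ ^ 2 := by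
  set v := y - x with hv
  have hmem : ∀ t : ℝ, t ∈ Set.Icc (0:ℝ) 1 → x + t • v ∈ S := by
    intro t ht
    have h' : (1 - t) • x + t • y ∈ S :=
      hSconv hx hy (by linarith [ht.2]) ht.1 (by ring)
    convert h' using 1
    simp only [hv]
    module
  have hderiv : ∀ t : ℝ, t ∈ Set.Icc (0:ℝ) 1 →
      HasDerivAt (fun t : ℝ => f (x + t • v)) ⟪gradient f (x + t • v), v⟫ t := by
    intro t ht
    have hline : HasDerivAt (fun t : ℝ => x + t • v) v t := by
      simpa using ((hasDerivAt_id t).smul_const v).const_add x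
    have hgrad := (hdiff _ (hmem t ht)).hasGradientAt
    rw [hasGradientAt_iff_hasFDerivAt] at hgrad
    have := hgrad.comp_hasDerivAt t hline
    exact this.congr_deriv (by simp [real_inner_comm])
  set h : ℝ → ℝ := fun t => f (x + t • v) - t * ⟪gradient f x, v⟫ - L / 2 * t ^ 2 * ‖v‖ ^ 2 with hh
  have hhd : ∀ t ∈ Set.Icc (0:ℝ) 1, HasDerivAt h
      (⟪gradient f (x + t • v), v⟫ - ⟪gradient f x, v⟫ - L * t * ‖v‖ ^ 2) t := by
    intro t ht
    have h1 : HasDerivAt (fun t : ℝ => t * ⟪gradient f x, v⟫) ⟪gradient f x, v⟫ t := by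
      simpa using (hasDerivAt_id t).mul_const _
    have h2 : HasDerivAt (fun t : ℝ => L / 2 * t ^ 2 * ‖v‖ ^ 2) (L * t * ‖v‖ ^ 2) t := by
      have : HasDerivAt (fun t : ℝ => t ^ 2) (2 * t) t := by
        simpa using hasDerivAt_pow 2 t
      exact ((this.const_mul (L / 2)).mul_const (‖v‖ ^ 2)).congr_deriv (by ring)
    exact ((hderiv t ht).sub h1).sub h2
  have hanti : AntitoneOn h (Set.Icc (0:ℝ) 1) := by
    apply antitoneOn_of_deriv_nonpos (convex_Icc 0 1)
    · exact fun t ht => ((hhd t ht).continuousAt).continuousWithinAt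
    · intro t ht
      rw [interior_Icc] at ht
      exact ((hhd t (Set.mem_Icc_of_Ioo ht)).differentiableAt).differentiableWithinAt
    · intro t ht
      rw [interior_Icc] at ht
      rw [(hhd t (Set.mem_Icc_of_Ioo ht)).deriv]
      have key : ⟪gradient f (x + t • v), v⟫ - ⟪gradient f x, v⟫ ≤ L * t * ‖v‖ ^ 2 := by
        have h1 : ⟪gradient f (x + t • v) - gradient f x, v⟫ ≤
            ‖gradient f (x + t • v) - gradient f x‖ * ‖v‖ :=
          real_inner_le_norm _ _
        have h2 : ‖gradient f (x + t • v) - gradient f x‖ ≤ L * (t * ‖v‖) := by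
          have := hLip _ (hmem t (Set.mem_Icc_of_Ioo ht)) _ hx
          simpa [norm_smul, abs_of_pos ht.1] using this
        calc ⟪gradient f (x + t • v), v⟫ - ⟪gradient f x, v⟫
            = ⟪gradient f (x + t • v) - gradient f x, v⟫ := by
              rw [inner_sub_left]
          _ ≤ ‖gradient f (x + t • v) - gradient f x‖ * ‖v‖ := h1
          _ ≤ L * (t * ‖v‖) * ‖v‖ := by
              apply mul_le_mul_of_nonneg_right h2 (norm_nonneg v)
          _ = L * t * ‖v‖ ^ 2 := by ring
      linarith
  have := hanti (Set.left_mem_Icc.2 zero_le_one) (Set.right_mem_Icc.2 zero_le_one) zero_le_one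
  have hy' : x + v = y := by simp [hv]
  have h1 : h 1 = f y - ⟪gradient f x, v⟫ - L / 2 * ‖v‖ ^ 2 := by
    simp [hh, hy']
  have h0 : h 0 = f x := by simp [hh]
  rw [h0, h1] at this
  linarith

/-- Lemma 4.1 (one-step decrease under a directionally relative δ-oracle):
with stepsize `ᾱ = (G̃(x) - δ‖∇f(x)‖)₊ / C`, one Frank–Wolfe step decreases
`f` by at least `(G̃(x) - δ‖∇f(x)‖)₊² / (2C)`. -/
theorem relative_delta_oracle_one_step_decrease {d : ℕ}
    (S : Set (EuclideanSpace ℝ (Fin d)))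
    (hSne : S.Nonempty) (hScomp : IsCompact S) (hSconv : Convex ℝ S)
    (f : EuclideanSpace ℝ (Fin d) → ℝ) (L C δ : ℝ)
    (hdiff : ∀ x ∈ S, DifferentiableAt ℝ f x)
    (hLip : ∀ x ∈ S, ∀ y ∈ S, ‖gradient f x - gradient f y‖ ≤ L * ‖x - y‖)
    (hC : C ≥ max (L * (Metric.diam S) ^ 2)
      (sSup ((fun x => ‖gradient f x‖) '' S) * Metric.diam S))
    (x s : EuclideanSpace ℝ (Fin d)) (hx : x ∈ S) (hs : s ∈ S)
    (g : EuclideanSpace ℝ (Fin d))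
    (horacle : ∀ t ∈ S, |⟪gradient f x - g, t - x⟫| ≤ δ * ‖gradient f x‖)
    (hmin : ∀ t ∈ S, ⟪g, s - x⟫ ≤ ⟪g, t - x⟫) :
    f (x + (max (⟪g, x - s⟫ - δ * ‖gradient f x‖) 0 / C) • (s - x)) ≤
      f x - (max (⟪g, x - s⟫ - δ * ‖gradient f x‖) 0) ^ 2 / (2 * C) := by
  rcases le_or_gt (⟪g, x - s⟫ - δ * ‖gradient f x‖) 0 with hA0 | hApos
  · rw [max_eq_right hA0]
    simp
  · set A : ℝ := ⟪g, x - s⟫ - δ * ‖gradient f x‖ with hA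
    rw [max_eq_left hApos.le]
    -- key lower bound on the true gap
    have key : A ≤ ⟪gradient f x, x - s⟫ := by
      have ho := (abs_le.1 (horacle s hs)).2
      simp only [hA, inner_sub_left, inner_sub_right] at ho ⊢
      linarith
    have hCauchy : ⟪gradient f x, x - s⟫ ≤ ‖gradient f x‖ * ‖x - s‖ :=
      real_inner_le_norm _ _
    have hDb := hScomp.isBounded
    have hdiam : ‖x - s‖ ≤ Metric.diam S := by
      rw [← dist_eq_norm]; exact Metric.dist_le_diam_of_mem hDb hx hs
    have hbdd : BddAbove ((fun z => ‖gradient f z‖) '' S) := by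
      refine ⟨‖gradient f x‖ + |L| * Metric.diam S, ?_⟩
      rintro _ ⟨z, hz, rfl⟩
      have h1 : ‖gradient f z - gradient f x‖ ≤ L * ‖z - x‖ := hLip z hz x hx
      have h2 : ‖z - x‖ ≤ Metric.diam S := by
        rw [← dist_eq_norm]; exact Metric.dist_le_diam_of_mem hDb hz hx
      have h3 : L * ‖z - x‖ ≤ |L| * Metric.diam S := by
        calc L * ‖z - x‖ ≤ |L| * ‖z - x‖ :=
              mul_le_mul_of_nonneg_right (le_abs_self L) (norm_nonneg _)
          _ ≤ |L| * Metric.diam S := mul_le_mul_of_nonneg_left h2 (abs_nonneg L)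
      have h4 : ‖gradient f z‖ - ‖gradient f x‖ ≤ ‖gradient f z - gradient f x‖ :=
        norm_sub_norm_le _ _
      simp only
      linarith
    have hG : ‖gradient f x‖ ≤ sSup ((fun z => ‖gradient f z‖) '' S) :=
      le_csSup hbdd ⟨x, hx, rfl⟩
    have hGnn : (0:ℝ) ≤ sSup ((fun z => ‖gradient f z‖) '' S) :=
      le_trans (norm_nonneg _) hG
    have hGD : ‖gradient f x‖ * ‖x - s‖ ≤
        sSup ((fun z => ‖gradient f z‖) '' S) * Metric.diam S :=
      mul_le_mul hG hdiam (norm_nonneg _) hGnn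
    have hAC : A ≤ C := by
      have := le_trans (le_max_right _ _) hC
      linarith
    have hCpos : (0:ℝ) < C := lt_of_lt_of_le hApos hAC
    have hLD : L * ‖s - x‖ ^ 2 ≤ C := by
      rcases le_or_gt L 0 with hL | hL
      · have : L * ‖s - x‖ ^ 2 ≤ 0 := mul_nonpos_of_nonpos_of_nonneg hL (sq_nonneg _)
        linarith
      · have hsx : ‖s - x‖ ≤ Metric.diam S := by
          rw [← dist_eq_norm]; exact Metric.dist_le_diam_of_mem hDb hs hx
        have h2 : ‖s - x‖ ^ 2 ≤ (Metric.diam S) ^ 2 :=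
          pow_le_pow_left₀ (norm_nonneg _) hsx 2
        have h3 : L * ‖s - x‖ ^ 2 ≤ L * (Metric.diam S) ^ 2 :=
          mul_le_mul_of_nonneg_left h2 hL.le
        have := le_trans (le_max_left _ _) hC
        linarith
    have hα0 : (0:ℝ) ≤ A / C := div_nonneg hApos.le hCpos.le
    have hα1 : A / C ≤ 1 := (div_le_one hCpos).2 hAC
    have hyS : x + (A / C) • (s - x) ∈ S := by
      have h' : (1 - A / C) • x + (A / C) • s ∈ S :=
        hSconv hx hs (by linarith) hα0 (by ring)
      convert h' using 1
      module
    have hdesc := descent_lemma_aux hSconv hdiff hLip hx hyS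
    have hsub : x + (A / C) • (s - x) - x = (A / C) • (s - x) := by abel
    rw [hsub] at hdesc
    have e1 : ⟪gradient f x, s - x⟫ ≤ -A := by
      have : ⟪gradient f x, s - x⟫ = -⟪gradient f x, x - s⟫ := by
        rw [← inner_neg_right]; congr 1; abel
      linarith
    have e2 : ⟪gradient f x, (A / C) • (s - x)⟫ = (A / C) * ⟪gradient f x, s - x⟫ :=
      real_inner_smul_right _ _ _
    have e3 : ‖(A / C) • (s - x)‖ ^ 2 = (A / C) ^ 2 * ‖s - x‖ ^ 2 := by
      rw [norm_smul, Real.norm_eq_abs, abs_of_nonneg hα0, mul_pow]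
    rw [e2, e3] at hdesc
    have e4 : (A / C) * ⟪gradient f x, s - x⟫ ≤ (A / C) * (-A) :=
      mul_le_mul_of_nonneg_left e1 hα0
    have e5 : L / 2 * ((A / C) ^ 2 * ‖s - x‖ ^ 2) ≤ (A / C) ^ 2 * C / 2 := by
      have := mul_le_mul_of_nonneg_left hLD (sq_nonneg (A / C))
      nlinarith
    have e6 : f x + (A / C) * (-A) + (A / C) ^ 2 * C / 2 = f x - A ^ 2 / (2 * C) := by
      field_simp
      ring
    linarith
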